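/- If a kernel W : [0,1]² → [0,∞) (symmetric, measurable, integrable) satisfies t(K_2, W) = 1 and t(C_4, W) = 1, then W = 1 almost everywhere on [0,1]². -/

import Mathlib

open MeasureTheory
open scoped ENNReal

noncomputable def μ01 : Measure ℝ := volume.restrict (Set.Icc 0 1)

instance : IsProbabilityMeasure μ01 := ⟨by simp [μ01, Real.volume_Icc]⟩

section helpers
variable {α : Type*} [MeasurableSpace α]

lemma sq_lintegral_le (μ : Measure α) [IsProbabilityMeasure μ] {h : α → ℝ≥0∞}
    (hm : AEMeasurable h μ) : (∫⁻ x, h x ∂μ) ^ 2 ≤ ∫⁻ x, h x ^ 2 ∂μ := by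
  have hpq : Real.HolderConjugate 2 2 := ⟨by norm_num, by norm_num, by norm_num⟩
  have h1 := ENNReal.lintegral_mul_le_Lp_mul_Lq μ hpq hm aemeasurable_const (g := fun _ => 1)
  simp only [Pi.mul_apply, mul_one, ENNReal.one_rpow, lintegral_const, measure_univ,
    one_mul] at h1
  have h2 : ∫⁻ x, h x ^ (2:ℝ) ∂μ = ∫⁻ x, h x ^ 2 ∂μ := by
    congr 1; ext x; rw [← ENNReal.rpow_natCast (h x) 2]; norm_num
  rw [h2] at h1
  calc (∫⁻ x, h x ∂μ) ^ 2 ≤ ((∫⁻ x, h x ^ 2 ∂μ) ^ (1/2 : ℝ)) ^ 2 := pow_le_pow_left' h1 2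
    _ = ∫⁻ x, h x ^ 2 ∂μ := by
        rw [← ENNReal.rpow_natCast _ 2, ← ENNReal.rpow_mul]; norm_num

lemma eq_const_of_moments (μ : Measure α) [IsProbabilityMeasure μ] {h : α → ℝ≥0∞}
    (hm : AEMeasurable h μ) {c : ℝ≥0∞} (hc : c ≠ ∞)
    (h1 : ∫⁻ x, h x ∂μ = c) (h2 : ∫⁻ x, h x ^ 2 ∂μ = c ^ 2) :
    h =ᵐ[μ] fun _ => c := by
  rcases eq_or_ne c 0 with rfl | hc0
  · exact (lintegral_eq_zero_iff' hm).mp h1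
  have hfin : ∀ᵐ x ∂μ, h x < ∞ := ae_lt_top' hm (h1 ▸ hc)
  set F : α → ℝ := fun x => (h x).toReal with hF
  have hFm : AEMeasurable F μ := hm.ennreal_toReal
  have hIF : Integrable F μ := integrable_toReal_of_lintegral_ne_top hm (h1 ▸ hc)
  have hIF2 : Integrable (fun x => F x ^ 2) μ := by
    have : (fun x => F x ^ 2) = fun x => ((h x ^ 2)).toReal := by
      ext x; simp [hF, ENNReal.toReal_pow]
    rw [this]
    exact integrable_toReal_of_lintegral_ne_top (hm.pow_const 2)
      (by rw [h2]; exact ENNReal.pow_ne_top hc)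
  set c' : ℝ := c.toReal with hc'
  have hiF : ∫ x, F x ∂μ = c' := by
    rw [integral_toReal hm hfin, h1]
  have hiF2 : ∫ x, F x ^ 2 ∂μ = c' ^ 2 := by
    have : ∀ᵐ x ∂μ, h x ^ 2 < ∞ := hfin.mono fun x hx => by
      exact ENNReal.pow_lt_top hx
    have e : ∫ x, ((h x ^ 2)).toReal ∂μ = (∫⁻ x, h x ^ 2 ∂μ).toReal :=
      integral_toReal (hm.pow_const 2) this
    calc ∫ x, F x ^ 2 ∂μ = ∫ x, ((h x ^ 2)).toReal ∂μ := by
          congr 1; ext x; simp [hF, ENNReal.toReal_pow]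
      _ = c' ^ 2 := by rw [e, h2, ENNReal.toReal_pow]
  have hzero : ∫ x, (F x - c') ^ 2 ∂μ = 0 := by
    have : ∀ x, (F x - c') ^ 2 = F x ^ 2 - 2 * c' * F x + c' ^ 2 := by intro x; ring
    simp_rw [this]
    rw [integral_add (by exact (hIF2.sub ((hIF.const_mul (2*c')))) ) (integrable_const _),
      integral_sub hIF2 (hIF.const_mul (2*c')), MeasureTheory.integral_const_mul, hiF, hiF2]
    simp [measure_univ]
    ring
  have hInt : Integrable (fun x => (F x - c') ^ 2) μ := by
    have : (fun x => (F x - c') ^ 2) = fun x => F x ^ 2 - 2 * c' * F x + c' ^ 2 := by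
      ext x; ring
    rw [this]
    exact ((hIF2.sub (hIF.const_mul (2*c'))).add (integrable_const _))
  have hae : (fun x => (F x - c') ^ 2) =ᵐ[μ] 0 := by
    rw [← integral_eq_zero_iff_of_nonneg (fun x => sq_nonneg _) hInt] at *
    exact hzero
  have hFc : F =ᵐ[μ] fun _ => c' := by
    filter_upwards [hae] with x hx
    have := sq_eq_zero_iff.mp hx
    linarith [sub_eq_zero.mp this]
  filter_upwards [hFc, hfin] with x hx hxf
  have : h x = ENNReal.ofReal (F x) := by
    rw [hF]; simp [ENNReal.ofReal_toReal hxf.ne]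
  rw [this, hx, hc', ENNReal.ofReal_toReal hc]

end helpers

theorem kernel_eq_one_of_edge_and_C4_density_one (W : ℝ → ℝ → ℝ)
    (hmeas : Measurable (Function.uncurry W))
    (hsymm : ∀ x y, W x y = W y x)
    (hnonneg : ∀ x y, 0 ≤ W x y)
    (hint : Integrable (Function.uncurry W) (μ01.prod μ01))
    (hK2 : ∫⁻ x, ∫⁻ y, ENNReal.ofReal (W x y) ∂μ01 ∂μ01 = 1)
    (hC4 : ∫⁻ x, ∫⁻ y, ∫⁻ z, ∫⁻ w,
        ENNReal.ofReal (W x y * W y z * W z w * W w x) ∂μ01 ∂μ01 ∂μ01 ∂μ01 = 1) :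
    ∀ᵐ p ∂(μ01.prod μ01), W p.1 p.2 = 1 := by
  set g : ℝ → ℝ → ℝ≥0∞ := fun x y => ENNReal.ofReal (W x y) with hg
  have hgm : Measurable (Function.uncurry g) := ENNReal.measurable_ofReal.comp hmeas
  have hgm1 : ∀ x, Measurable (g x) := fun x => hgm.comp measurable_prodMk_left
  have hgm2 : ∀ y, Measurable (fun x => g x y) := fun y => hgm.comp measurable_prodMk_right
  have hgs : ∀ x y, g x y = g y x := fun x y => by rw [hg]; simp [hsymm x y]
  set f : ℝ → ℝ≥0∞ := fun x => ∫⁻ y, g x y ∂μ01 with hf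
  have hfm : Measurable f := Measurable.lintegral_prod_right' hgm
  set U : ℝ → ℝ → ℝ≥0∞ := fun x y => ∫⁻ z, g x z * g z y ∂μ01 with hU
  have hUm : Measurable (Function.uncurry U) := by
    apply Measurable.lintegral_prod_right'
      (f := fun p : (ℝ × ℝ) × ℝ => g p.1.1 p.2 * g p.2 p.1.2)
    exact (hgm.comp ((measurable_fst.fst).prodMk measurable_snd)).mul
      (hgm.comp (measurable_snd.prodMk measurable_fst.snd))
  have hUs : ∀ x y, U x y = U y x := by
    intro x y
    rw [hU]
    exact lintegral_congr fun z => by rw [hgs y z, hgs z x, mul_comm]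
  set π : Measure (ℝ × ℝ) := μ01.prod μ01 with hπ
  have hUae : AEMeasurable (fun p : ℝ × ℝ => U p.1 p.2) π := hUm.aemeasurable
  -- step 1 : ∫∫ U = ∫ f²
  have step1 : ∫⁻ p, U p.1 p.2 ∂π = ∫⁻ z, f z ^ 2 ∂μ01 := by
    rw [hπ, lintegral_prod (fun p : ℝ × ℝ => U p.1 p.2) hUm.aemeasurable]
    have e1 : ∀ x, ∫⁻ y, U x y ∂μ01 = ∫⁻ z, g x z * f z ∂μ01 := by
      intro x
      rw [hU]
      rw [lintegral_lintegral_swap (((hgm1 x).comp measurable_snd).mul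
        (hgm.comp (measurable_snd.prodMk measurable_fst))).aemeasurable]
      exact lintegral_congr fun z => lintegral_const_mul _ (hgm1 z)
    calc ∫⁻ x, ∫⁻ y, U x y ∂μ01 ∂μ01 = ∫⁻ x, ∫⁻ z, g x z * f z ∂μ01 ∂μ01 :=
          lintegral_congr fun x => e1 x
      _ = ∫⁻ z, ∫⁻ x, g x z * f z ∂μ01 ∂μ01 :=
          lintegral_lintegral_swap (hgm.mul (hfm.comp measurable_snd)).aemeasurable
      _ = ∫⁻ z, f z ^ 2 ∂μ01 := by
          refine lintegral_congr fun z => ?_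
          rw [lintegral_mul_const _ (hgm2 z)]
          have : ∫⁻ x, g x z ∂μ01 = f z := lintegral_congr fun x => hgs x z
          rw [this, sq]
  -- step 2 : ∫∫ U² = 1
  have step2 : ∫⁻ p, U p.1 p.2 ^ 2 ∂π = 1 := by
    have hC4' : ∫⁻ x, ∫⁻ y, ∫⁻ z, ∫⁻ w,
        g x y * g y z * g z w * g w x ∂μ01 ∂μ01 ∂μ01 ∂μ01 = 1 := by
      rw [← hC4]
      refine lintegral_congr fun x => lintegral_congr fun y =>
        lintegral_congr fun z => lintegral_congr fun w => ?_
      rw [hg]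
      rw [ENNReal.ofReal_mul (mul_nonneg (mul_nonneg (hnonneg _ _) (hnonneg _ _)) (hnonneg _ _)),
        ENNReal.ofReal_mul (mul_nonneg (hnonneg _ _) (hnonneg _ _)),
        ENNReal.ofReal_mul (hnonneg _ _)]
    have inner : ∀ x, ∫⁻ y, ∫⁻ z, ∫⁻ w,
        g x y * g y z * g z w * g w x ∂μ01 ∂μ01 ∂μ01 = ∫⁻ z, U x z * U z x ∂μ01 := by
      intro x
      have e1 : ∀ y z, ∫⁻ w, g x y * g y z * g z w * g w x ∂μ01 = g x y * g y z * U z x := by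
        intro y z
        rw [hU, ← lintegral_const_mul _ (f := fun w => g z w * g w x) ((hgm1 z).mul (hgm2 x))]
        exact lintegral_congr fun w => by ring
      calc ∫⁻ y, ∫⁻ z, ∫⁻ w, g x y * g y z * g z w * g w x ∂μ01 ∂μ01 ∂μ01
          = ∫⁻ y, ∫⁻ z, g x y * g y z * U z x ∂μ01 ∂μ01 :=
            lintegral_congr fun y => lintegral_congr fun z => e1 y z
        _ = ∫⁻ z, ∫⁻ y, g x y * g y z * U z x ∂μ01 ∂μ01 := by
            refine lintegral_lintegral_swap ?_
            have hU1 : Measurable fun z : ℝ => U z x :=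
              hUm.comp (measurable_id.prodMk measurable_const)
            exact ((((hgm1 x).comp measurable_fst).mul
              (hgm.comp (measurable_fst.prodMk measurable_snd))).mul
              (hU1.comp measurable_snd)).aemeasurable
        _ = ∫⁻ z, U x z * U z x ∂μ01 := by
            refine lintegral_congr fun z => ?_
            rw [lintegral_mul_const _ (f := fun y => g x y * g y z) ((hgm1 x).mul (hgm2 z))]
    have key : ∫⁻ x, ∫⁻ z, U x z ^ 2 ∂μ01 ∂μ01 = 1 := by
      rw [← hC4']
      refine lintegral_congr fun x => ?_
      rw [inner x]
      refine lintegral_congr fun z => ?_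
      rw [sq]
      exact congrArg (fun t => U x z * t) (hUs x z)
    rw [hπ, lintegral_prod (fun p : ℝ × ℝ => U p.1 p.2 ^ 2) (hUm.pow_const 2).aemeasurable]
    exact key
  -- step 3 : f = 1 a.e. and U = 1 a.e.
  have ha1 : ∫⁻ p, U p.1 p.2 ∂π = 1 := by
    have hle : ∫⁻ p, U p.1 p.2 ∂π ≤ 1 := by
      by_contra hlt
      push_neg at hlt
      have : (1 : ℝ≥0∞) < (∫⁻ p, U p.1 p.2 ∂π) ^ 2 := one_lt_pow₀ hlt two_ne_zero
      exact absurd (sq_lintegral_le π hUae) (by rw [step2]; exact not_le.mpr this)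
    have hge : 1 ≤ ∫⁻ p, U p.1 p.2 ∂π := by
      rw [step1]
      calc (1:ℝ≥0∞) = (∫⁻ x, f x ∂μ01) ^ 2 := by rw [hK2]; norm_num
        _ ≤ ∫⁻ x, f x ^ 2 ∂μ01 := sq_lintegral_le μ01 hfm.aemeasurable
    exact le_antisymm hle hge
  have hfone : f =ᵐ[μ01] fun _ => 1 :=
    eq_const_of_moments μ01 hfm.aemeasurable ENNReal.one_ne_top hK2
      (by rw [← step1, ha1]; norm_num)
  have hUone : (fun p : ℝ × ℝ => U p.1 p.2) =ᵐ[π] fun _ => 1 :=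
    eq_const_of_moments π hUae ENNReal.one_ne_top ha1 (by rw [step2]; norm_num)
  -- step 4 : for each rational q, ∫⁻ y in Iio q, g x y ∂μ01 = μ01 (Iio q) for a.e. x
  have step4 : ∀ q : ℚ, ∀ᵐ x ∂μ01,
      ∫⁻ y in Set.Iio (q:ℝ), g x y ∂μ01 = μ01 (Set.Iio (q:ℝ)) := by
    intro q
    set A : Set ℝ := Set.Iio (q:ℝ) with hA
    set ρ : Measure ℝ := μ01.restrict A with hρ
    set c : ℝ≥0∞ := μ01 A with hc
    have hcne : c ≠ ∞ := (measure_lt_top μ01 A).ne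
    have hqm : Measurable fun x => ∫⁻ y, g x y ∂ρ :=
      Measurable.lintegral_prod_right' (ν := ρ) hgm
    have m1 : ∫⁻ x, ∫⁻ y, g x y ∂ρ ∂μ01 = c := by
      rw [lintegral_lintegral_swap (μ := μ01) (ν := ρ) hgm.aemeasurable]
      have e : ∀ y, ∫⁻ x, g x y ∂μ01 = f y := fun y => lintegral_congr fun x => hgs x y
      calc ∫⁻ y, ∫⁻ x, g x y ∂μ01 ∂ρ = ∫⁻ y, f y ∂ρ := lintegral_congr e
        _ = ∫⁻ _, 1 ∂ρ := lintegral_congr_ae (ae_restrict_of_ae hfone)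
        _ = c := by rw [lintegral_one, hρ, Measure.restrict_apply_univ]
    have m2 : ∫⁻ x, (∫⁻ y, g x y ∂ρ) ^ 2 ∂μ01 = c ^ 2 := by
      have e0 : ∀ x, (∫⁻ y, g x y ∂ρ) ^ 2 = ∫⁻ y, ∫⁻ y', g x y * g x y' ∂ρ ∂ρ := by
        intro x
        rw [sq, ← lintegral_mul_const _ (hgm1 x)]
        exact lintegral_congr fun y => (lintegral_const_mul _ (hgm1 x)).symm
      calc ∫⁻ x, (∫⁻ y, g x y ∂ρ) ^ 2 ∂μ01
          = ∫⁻ x, ∫⁻ y, ∫⁻ y', g x y * g x y' ∂ρ ∂ρ ∂μ01 := lintegral_congr e0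
        _ = ∫⁻ y, ∫⁻ x, ∫⁻ y', g x y * g x y' ∂ρ ∂μ01 ∂ρ := by
            refine lintegral_lintegral_swap (μ := μ01) (ν := ρ) ?_
            refine (Measurable.lintegral_prod_right' (ν := ρ)
              (f := fun p : (ℝ × ℝ) × ℝ => g p.1.1 p.1.2 * g p.1.1 p.2) ?_).aemeasurable
            exact (hgm.comp ((measurable_fst.fst).prodMk measurable_fst.snd)).mul
              (hgm.comp ((measurable_fst.fst).prodMk measurable_snd))
        _ = ∫⁻ y, ∫⁻ y', ∫⁻ x, g x y * g x y' ∂μ01 ∂ρ ∂ρ := by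
            refine lintegral_congr fun y => ?_
            refine lintegral_lintegral_swap (μ := μ01) (ν := ρ) ?_
            exact ((hgm.comp (measurable_fst.prodMk measurable_const)).mul
              (hgm.comp (measurable_fst.prodMk measurable_snd))).aemeasurable
        _ = ∫⁻ y, ∫⁻ y', U y y' ∂ρ ∂ρ := by
            refine lintegral_congr fun y => lintegral_congr fun y' => ?_
            rw [hU]
            exact lintegral_congr fun x => by rw [hgs x y]
        _ = ∫⁻ p, U p.1 p.2 ∂(ρ.prod ρ) :=
            (lintegral_prod (fun p : ℝ × ℝ => U p.1 p.2) hUm.aemeasurable).symm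
        _ = ∫⁻ p, U p.1 p.2 ∂(π.restrict (A ×ˢ A)) := by
            rw [hρ, Measure.prod_restrict, hπ]
        _ = c ^ 2 := by
            rw [lintegral_congr_ae (ae_restrict_of_ae hUone), lintegral_one,
              Measure.restrict_apply_univ, hπ, hA]
            rw [Measure.prod_prod, sq]
    filter_upwards [eq_const_of_moments μ01 hqm.aemeasurable hcne m1 m2] with x hx
    exact hx
  -- step 5 : for a.e. x, g x = 1 a.e.
  have step5 : ∀ᵐ x ∂μ01, ∀ᵐ y ∂μ01, W x y = 1 := by
    filter_upwards [hfone, ae_all_iff.mpr step4] with x hfx hx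
    have hν_univ : μ01.withDensity (g x) Set.univ = 1 := by
      rw [withDensity_apply _ MeasurableSet.univ, Measure.restrict_univ]
      exact hfx
    haveI : IsFiniteMeasure (μ01.withDensity (g x)) :=
      ⟨by rw [hν_univ]; exact ENNReal.one_lt_top⟩
    have hext : μ01.withDensity (g x) = μ01 := by
      refine ext_of_generate_finite (⋃ q : ℚ, {Set.Iio (q:ℝ)})
        (BorelSpace.measurable_eq.trans Real.borel_eq_generateFrom_Iio_rat) ?_ ?_
        (by rw [hν_univ, measure_univ])
      · rintro s hs t ht -
        simp only [Set.mem_iUnion, Set.mem_singleton_iff] at hs ht ⊢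
        obtain ⟨a, rfl⟩ := hs
        obtain ⟨b, rfl⟩ := ht
        exact ⟨min a b, by rw [Set.Iio_inter_Iio, Rat.cast_min]⟩
      · rintro s hs
        simp only [Set.mem_iUnion, Set.mem_singleton_iff] at hs
        obtain ⟨a, rfl⟩ := hs
        rw [withDensity_apply _ measurableSet_Iio]
        exact hx a
    have hgone : g x =ᵐ[μ01] fun _ => 1 := by
      have h1 : μ01.withDensity (g x) = μ01.withDensity fun _ => 1 := by
        rw [hext]
        exact withDensity_one.symm
      exact (withDensity_eq_iff (hgm1 x).aemeasurable aemeasurable_const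
        (by rw [show (∫⁻ y, g x y ∂μ01) = f x from rfl, hfx]; exact ENNReal.one_ne_top)).mp h1
    filter_upwards [hgone] with y hy
    have : ENNReal.ofReal (W x y) = ENNReal.ofReal 1 := by
      rw [ENNReal.ofReal_one]; exact hy
    exact (ENNReal.ofReal_eq_ofReal_iff (hnonneg x y) zero_le_one).mp this
  -- step 6 : conclude
  have hS : MeasurableSet {p : ℝ × ℝ | ¬ W p.1 p.2 = 1} := by
    have : MeasurableSet {p : ℝ × ℝ | W p.1 p.2 = 1} := hmeas (measurableSet_singleton 1)
    exact this.compl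
  rw [ae_iff]
  rw [hπ] at *
  rw [Measure.measure_prod_null hS]
  filter_upwards [step5] with x hx
  simpa [ae_iff] using hx
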